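/- For every group G, field K, and n ≥ 1, there is a ring isomorphism between Mat_n(K[G]) and the ring LCA(G, K^n) of linear cellular automata τ : (K^n)^G → (K^n)^G, where the multiplication in LCA(G, K^n) is composition of maps and addition is pointwise. -/

import Mathlib

/-- A linear cellular automaton over `G` with alphabet the `K`-vector space
`K^n`. -/
def IsLinearCellularAutomaton (G : Type) [Group G] (K : Type) [Field K] (n : ℕ)
    (τ : (G → (Fin n → K)) → (G → (Fin n → K))) : Prop :=
  ∃ (M : Finset G) (μ : ((M → (Fin n → K)) →ₗ[K] (Fin n → K))),
    ∀ (c : G → (Fin n → K)) (g : G), τ c g = μ fun m : M => c (g * (m : G))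

section Aux

variable {G : Type} [Group G] {K : Type} [Field K] {n : ℕ}

/-- Convolution-type evaluation of an element of the group algebra against a
configuration `c : G → K` at the point `g`. -/
noncomputable def convL (c : G → K) (g : G) : MonoidAlgebra K G →ₗ[K] K where
  toFun f := Finsupp.sum f.coeff fun m a => a * c (g * m)
  map_add' f h := by
    rw [MonoidAlgebra.coeff_add]; exact Finsupp.sum_add_index' (by simp) (by intros; ring)
  map_smul' a f := by
    show Finsupp.sum (a • f).coeff (fun m b => b * c (g * m))
        = a * Finsupp.sum f.coeff (fun m b => b * c (g * m))
    rw [MonoidAlgebra.coeff_smul, Finsupp.sum_smul_index (by simp)]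
    simp [Finsupp.sum, Finset.mul_sum, mul_assoc]

lemma convL_apply' (c : G → K) (g : G) (f : MonoidAlgebra K G) :
    convL c g f = ∑ m ∈ f.coeff.support, f.coeff m * c (g * m) := rfl

lemma convL_single (c : G → K) (g : G) (m : G) (a : K) :
    convL c g (MonoidAlgebra.single m a) = a * c (g * m) := by
  rw [convL_apply', MonoidAlgebra.coeff_single, Finset.sum_subset Finsupp.support_single_subset
    (by simp +contextual)]
  simp

lemma convL_zero_fn (g : G) (f : MonoidAlgebra K G) :
    convL (fun _ => (0 : K)) g f = 0 := by
  simp [convL_apply']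

lemma convL_sum_fn {ι : Type*} (s : Finset ι) (h : ι → G → K) (g : G)
    (f : MonoidAlgebra K G) :
    convL (fun g' => ∑ j ∈ s, h j g') g f = ∑ j ∈ s, convL (h j) g f := by
  simp only [convL_apply', Finset.mul_sum]
  exact Finset.sum_comm

lemma convL_single_mul (c : G → K) (g : G) (m : G) (a : K) (h : MonoidAlgebra K G) :
    convL c g (MonoidAlgebra.single m a * h) = a * convL c (g * m) h := by
  induction h using MonoidAlgebra.induction_on with
  | of g' =>
      rw [show MonoidAlgebra.of K G g' = MonoidAlgebra.single g' 1 from rfl,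
        MonoidAlgebra.single_mul_single, convL_single, convL_single, mul_assoc, mul_assoc]
  | add h1 h2 ih1 ih2 => rw [mul_add, map_add, map_add, ih1, ih2]; ring
  | smul r h ih => rw [mul_smul_comm, map_smul, map_smul, ih]; simp [mul_left_comm]

lemma convL_mul (c : G → K) (g : G) (f h : MonoidAlgebra K G) :
    convL c g (f * h) = convL (fun g' => convL c g' h) g f := by
  induction f using MonoidAlgebra.induction_on with
  | of g' =>
      rw [show MonoidAlgebra.of K G g' = MonoidAlgebra.single g' 1 from rfl,
        convL_single_mul, convL_single]
  | add f1 f2 ih1 ih2 => rw [add_mul, map_add, map_add, ih1, ih2]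
  | smul r f ih => rw [smul_mul_assoc, map_smul, map_smul, ih]

/-- The cellular automaton attached to a matrix over the group algebra. -/
noncomputable def lcaOf (A : Matrix (Fin n) (Fin n) (MonoidAlgebra K G)) :
    (G → (Fin n → K)) → (G → (Fin n → K)) :=
  fun c g i => ∑ j, convL (fun g' => c g' j) g (A i j)

lemma lcaOf_mul (A B : Matrix (Fin n) (Fin n) (MonoidAlgebra K G)) :
    lcaOf (A * B) = lcaOf A ∘ lcaOf B := by
  funext c g i
  simp only [lcaOf, Function.comp_apply, Matrix.mul_apply, map_sum, convL_mul]
  rw [Finset.sum_comm]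
  refine Finset.sum_congr rfl fun k _ => ?_
  rw [← convL_sum_fn]

lemma lcaOf_add (A B : Matrix (Fin n) (Fin n) (MonoidAlgebra K G))
    (c : G → (Fin n → K)) : lcaOf (A + B) c = lcaOf A c + lcaOf B c := by
  funext g i
  simp [lcaOf, Finset.sum_add_distrib]

lemma lcaOf_one : lcaOf (1 : Matrix (Fin n) (Fin n) (MonoidAlgebra K G)) = id := by
  funext c g i
  show ∑ j, convL (fun g' => c g' j) g ((1 : Matrix _ _ _) i j) = c g i
  rw [Finset.sum_eq_single i]
  · rw [Matrix.one_apply_eq,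
      show (1 : MonoidAlgebra K G) = MonoidAlgebra.single 1 1 from rfl, convL_single]
    simp
  · intro b _ hb
    rw [Matrix.one_apply_ne (Ne.symm hb), map_zero]
  · intro h; exact absurd (Finset.mem_univ i) h

lemma isLCA_lcaOf (A : Matrix (Fin n) (Fin n) (MonoidAlgebra K G)) :
    IsLinearCellularAutomaton G K n (lcaOf A) := by
  classical
  set M : Finset G :=
    (Finset.univ : Finset (Fin n × Fin n)).biUnion fun p => (A p.1 p.2).coeff.support with hM
  have hsub : ∀ i j, (A i j).coeff.support ⊆ M := by
    intro i j m hm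
    exact Finset.mem_biUnion.2 ⟨(i, j), Finset.mem_univ _, hm⟩
  refine ⟨M, ⟨⟨fun x i => ∑ j, ∑ m ∈ M.attach, (A i j).coeff (m : G) * x m j, ?_⟩, ?_⟩, ?_⟩
  · intro x y
    funext i
    simp [mul_add, Finset.sum_add_distrib]
  · intro a x
    funext i
    simp [Finset.mul_sum, mul_left_comm]
  · intro c g
    funext i
    show lcaOf A c g i = ∑ j, ∑ m ∈ M.attach, (A i j).coeff (m : G) * c (g * (m : G)) j
    unfold lcaOf
    refine Finset.sum_congr rfl fun j _ => ?_
    rw [convL_apply', Finset.sum_attach M fun m => (A i j).coeff m * c (g * m) j]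
    exact Finset.sum_subset (hsub i j) fun m _ hm => by
      rw [Finsupp.notMem_support_iff.1 hm, zero_mul]

lemma lcaOf_injective :
    Function.Injective (lcaOf (n := n) (G := G) (K := K)) := by
  classical
  intro A B hAB
  ext i j m0
  set c : G → Fin n → K := fun g' j' => if j' = j ∧ g' = m0 then 1 else 0 with hc
  have key : ∀ C : Matrix (Fin n) (Fin n) (MonoidAlgebra K G),
      lcaOf C c 1 i = (C i j).coeff m0 := by
    intro C
    unfold lcaOf
    rw [Finset.sum_eq_single j]
    · rw [convL_apply']
      simp only [hc, one_mul, true_and, mul_ite, mul_one, mul_zero]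
      rw [Finset.sum_ite_eq' (C i j).coeff.support m0 (fun m => (C i j).coeff m)]
      split_ifs with hh
      · rfl
      · exact (Finsupp.notMem_support_iff.1 hh).symm
    · intro b _ hb
      have hz : (fun g' => c g' b) = fun _ => (0 : K) := by
        funext g'
        exact if_neg fun hcon => hb hcon.1
      rw [hz, convL_zero_fn]
    · intro h; exact absurd (Finset.mem_univ j) h
  rw [← key A, ← key B, hAB]

lemma lcaOf_surjective (τ : (G → (Fin n → K)) → (G → (Fin n → K)))
    (hτ : IsLinearCellularAutomaton G K n τ) :
    ∃ A : Matrix (Fin n) (Fin n) (MonoidAlgebra K G), lcaOf A = τ := by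
  classical
  obtain ⟨M, μ, hμ⟩ := hτ
  refine ⟨fun i j => ∑ m ∈ M.attach,
    MonoidAlgebra.single (m : G) (μ ((Pi.single m (Pi.single j 1) : M → Fin n → K)) i), ?_⟩
  have hdecomp : ∀ x : M → Fin n → K,
      x = ∑ m ∈ Finset.univ (α := M), ∑ j : Fin n,
        x m j • (Pi.single m (Pi.single j (1 : K)) : M → Fin n → K) := by
    intro x
    funext m' j'
    rw [Finset.sum_apply, Finset.sum_apply]
    simp [ite_apply, Pi.single_apply, mul_ite, Finset.sum_ite_eq]
  funext c g
  rw [hμ c g]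
  have key : ∀ i, μ (fun m : M => c (g * (m : G))) i
      = ∑ m ∈ M.attach, ∑ j, c (g * (m : G)) j * μ ((Pi.single m (Pi.single j 1) : M → Fin n → K)) i := by
    intro i
    conv_lhs => rw [hdecomp (fun m : M => c (g * (m : G)))]
    rw [map_sum, Finset.sum_apply, Finset.univ_eq_attach]
    refine Finset.sum_congr rfl fun m _ => ?_
    rw [map_sum, Finset.sum_apply]
    refine Finset.sum_congr rfl fun j _ => ?_
    rw [map_smul, Pi.smul_apply, smul_eq_mul]
  funext i
  rw [key i]
  show ∑ j, convL (fun g' => c g' j) g _ = _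
  rw [Finset.sum_comm]
  refine Finset.sum_congr rfl fun j _ => ?_
  rw [map_sum]
  refine Finset.sum_congr rfl fun m _ => ?_
  rw [convL_single]
  exact mul_comm _ _

end Aux

/-- There is a ring isomorphism `Mat_n(K[G]) ≅ LCA(G, K^n)`: a bijection `ψ`
from `n×n` matrices over the group ring onto the set of linear cellular
automata `(K^n)^G → (K^n)^G`, sending products to compositions, sums to
pointwise sums, and `1` to the identity. -/
theorem matrix_groupRing_iso_LCA {G : Type} [Group G] {K : Type} [Field K]
    (n : ℕ) (hn : 1 ≤ n) :
    ∃ ψ : Matrix (Fin n) (Fin n) (MonoidAlgebra K G) ≃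
        {τ : (G → (Fin n → K)) → (G → (Fin n → K)) //
          IsLinearCellularAutomaton G K n τ},
      (∀ a b, (ψ (a * b)).1 = (ψ a).1 ∘ (ψ b).1) ∧
      (∀ a b, ∀ c : G → (Fin n → K), (ψ (a + b)).1 c = (ψ a).1 c + (ψ b).1 c) ∧
      (ψ 1).1 = id := by
  have hbij : Function.Bijective
      (fun A : Matrix (Fin n) (Fin n) (MonoidAlgebra K G) =>
        (⟨lcaOf A, isLCA_lcaOf A⟩ :
          {τ : (G → (Fin n → K)) → (G → (Fin n → K)) //
            IsLinearCellularAutomaton G K n τ})) := by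
    constructor
    · intro A B h
      exact lcaOf_injective (congrArg Subtype.val h)
    · rintro ⟨τ, hτ⟩
      obtain ⟨A, hA⟩ := lcaOf_surjective τ hτ
      exact ⟨A, Subtype.ext hA⟩
  refine ⟨Equiv.ofBijective _ hbij, fun a b => ?_, fun a b c => ?_, ?_⟩
  · exact lcaOf_mul a b
  · exact lcaOf_add a b c
  · exact lcaOf_one
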